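/- A string of length at most ak-1 over an alphabet of size a cannot contain every length-k word over that alphabet as a (not necessarily contiguous) subsequence; conversely, the string formed by writing the alphabet k times in succession (length ak) contains every length-k word as a subsequence. Hence the minimal length of a k-omni string over an a-letter alphabet is exactly ak. -/

import Mathlib

/-- Upper bound helper: any word of length ≤ k is a sublist of the alphabet repeated k times. -/
lemma omni_upper (a : ℕ) : ∀ (k : ℕ) (T : List (Fin a)), T.length ≤ k →
    T.Sublist (List.replicate k (List.ofFn (fun i : Fin a => i))).flatten := by
  intro k
  induction k with
  | zero =>
    intro T hT
    simp only [Nat.le_zero, List.length_eq_zero_iff] at hT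
    simp [hT]
  | succ k ih =>
    intro T hT
    rw [List.replicate_succ, List.flatten_cons]
    cases T with
    | nil => exact List.nil_sublist _
    | cons t T' =>
      have h1 : [t].Sublist (List.ofFn (fun i : Fin a => i)) := by
        refine List.singleton_sublist.mpr ?_
        simp [List.mem_ofFn]
      have h2 := ih T' (by simpa using Nat.succ_le_succ_iff.mp hT)
      simpa using h1.append h2

/-- Lower bound helper. -/
lemma omni_lower (a : ℕ) (ha : 1 ≤ a) : ∀ (k : ℕ) (S : List (Fin a)),
    (∀ T : List (Fin a), T.length = k → T.Sublist S) → a * k ≤ S.length := by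
  intro k
  induction k with
  | zero => intro S _; simp
  | succ k ih =>
    intro S hS
    -- every letter occurs in S
    have hmem : ∀ c : Fin a, c ∈ S := by
      intro c
      have := hS (List.replicate (k+1) c) (by simp)
      exact this.mem (by simp)
    -- pick the letter with the latest first occurrence
    haveI : Nonempty (Fin a) := ⟨⟨0, ha⟩⟩
    obtain ⟨c, -, hc⟩ := Finset.exists_max_image Finset.univ
      (fun c : Fin a => List.idxOf c S) ⟨Classical.arbitrary (Fin a), Finset.mem_univ _⟩
    set i := List.idxOf c S with hi
    have hilt : i < S.length := List.idxOf_lt_length_iff.mpr (hmem c)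
    -- all a first-occurrence indices are distinct and ≤ i, so a ≤ i + 1
    have hai : a ≤ i + 1 := by
      have hcard := Finset.card_le_card_of_injOn (s := (Finset.univ : Finset (Fin a))) (t := Finset.range (i+1))
        (fun c' : Fin a => List.idxOf c' S)
        (fun c' _ => Finset.mem_range.mpr (Nat.lt_succ_of_le (hc c' (Finset.mem_univ c'))))
        (fun x _ y _ hxy => (List.idxOf_inj (hmem x)).mp hxy)
      simpa using hcard
    -- every length-k word is a sublist of drop (i+1) S
    have hdrop : ∀ T : List (Fin a), T.length = k → T.Sublist (S.drop (i+1)) := by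
      intro T hT
      have h := hS (c :: T) (by simp [hT])
      rw [List.cons_sublist_iff] at h
      obtain ⟨r₁, r₂, hS', hcr, hTr⟩ := h
      have hlen : i + 1 ≤ r₁.length := by
        have : List.idxOf c S < r₁.length := by
          rw [hS', List.idxOf_append_of_mem hcr]
          exact List.idxOf_lt_length_iff.mpr hcr
        omega
      have hr₂ : r₂ = S.drop r₁.length := by
        rw [hS']; simp
      have hsub : (S.drop r₁.length).Sublist (S.drop (i+1)) := by
        have : S.drop r₁.length = (S.drop (i+1)).drop (r₁.length - (i+1)) := by
          rw [List.drop_drop]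
          congr 1
          omega
        rw [this]
        exact List.drop_sublist _ _
      exact hTr.trans (hr₂ ▸ hsub)
    have hIH := ih (S.drop (i+1)) hdrop
    rw [List.length_drop] at hIH
    have : a * (k + 1) = a * k + a := by ring
    omega

/-- The minimal length of a `k`-omni string over an `a`-letter alphabet is exactly `a * k`:
any string containing every length-`k` word over `Fin a` as a (scattered) subsequence has
length at least `a * k`, and the string obtained by writing the alphabet `k` times in
succession has length `a * k` and contains every length-`k` word as a subsequence. -/
theorem stmt_0 (a k : ℕ) (ha : 1 ≤ a) (hk : 1 ≤ k) :
    (∀ S : List (Fin a),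
      (∀ T : List (Fin a), T.length = k → T.Sublist S) → a * k ≤ S.length) ∧
    ((List.replicate k (List.ofFn (fun i : Fin a => i))).flatten.length = a * k ∧
      ∀ T : List (Fin a), T.length = k →
        T.Sublist (List.replicate k (List.ofFn (fun i : Fin a => i))).flatten) := by
  refine ⟨omni_lower a ha k, ?_, fun T hT => omni_upper a k T hT.le⟩
  simp [List.length_flatten, Nat.mul_comm]
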